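/- arXiv:1704.00249 — 3 statements merged into one kernel-verified Lean document; each statement's English description precedes it below -/
import Mathlib

section
/- Let t, n ≥ 1 and let P_1, …, P_t be convex subsets of ℝ^n. For each j = 1, …, t let e_j ∈ ℝ^t denote the j-th standard basis vector, let R_j = {e_j} × P_j ⊆ ℝ^t × ℝ^n, and let R be the convex hull of R_1 ∪ ⋯ ∪ R_t. Then for every x ∈ ℤ^n: x belongs to P_1 ∪ ⋯ ∪ P_t if and only if there exists τ ∈ ℤ^t such that (τ, x) ∈ R. -/
/-- A union of convex sets `P_1, …, P_t ⊆ ℝ^n` contains an integer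
point `x` iff the lifted polytope `R = conv({e_1} × P_1 ∪ ⋯ ∪ {e_t} × P_t)`
contains an integer point `(τ, x)`. -/
theorem union_eq_integer_projection_of_lift
    (t n : ℕ) (ht : 1 ≤ t) (hn : 1 ≤ n)
    (P : Fin t → Set (Fin n → ℝ)) (hP : ∀ j, Convex ℝ (P j))
    (R : Set ((Fin t → ℝ) × (Fin n → ℝ)))
    (hR : R = convexHull ℝ (⋃ j, ({Pi.single j (1 : ℝ)} : Set (Fin t → ℝ)) ×ˢ P j)) :
    ∀ x : Fin n → ℝ, (∀ i, ∃ z : ℤ, x i = (z : ℝ)) →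
      ((x ∈ ⋃ j, P j) ↔
        ∃ τ : Fin t → ℤ, ((fun j => (τ j : ℝ)), x) ∈ R) := by
  subst hR
  intro x hx
  constructor
  · rintro hxmem
    rw [Set.mem_iUnion] at hxmem
    obtain ⟨j, hxj⟩ := hxmem
    refine ⟨fun k => if k = j then 1 else 0, ?_⟩
    apply subset_convexHull
    rw [Set.mem_iUnion]
    refine ⟨j, ?_, hxj⟩
    simp only [Set.mem_singleton_iff]
    funext k
    simp [Pi.single_apply]
  · rintro ⟨τ, hτ⟩
    rw [convexHull_eq] at hτ
    obtain ⟨ι, s, w, z, hw0, hw1, hz, hcm⟩ := hτ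
    rw [Finset.centerMass_eq_of_sum_1 _ _ hw1] at hcm
    -- switch to attach
    have hsum : ∑ i ∈ s.attach, w i.1 • z i.1 = ((fun j => (τ j : ℝ)), x) := by
      rw [Finset.sum_attach s (fun i => w i • z i)]; exact hcm
    have hw1' : ∑ i ∈ s.attach, w i.1 = 1 := by
      rw [Finset.sum_attach s w]; exact hw1
    have hw0' : ∀ i : {i // i ∈ s}, 0 ≤ w i.1 := fun i => hw0 i.1 i.2
    -- choose index J
    have hz' : ∀ i : {i // i ∈ s}, ∃ j, (z i.1).1 = Pi.single j 1 ∧ (z i.1).2 ∈ P j := by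
      intro i
      have := hz i.1 i.2
      rw [Set.mem_iUnion] at this
      obtain ⟨j, hj⟩ := this
      exact ⟨j, hj.1, hj.2⟩
    choose J hJ1 hJ2 using hz'
    have hfst : ∀ k, (τ k : ℝ) = ∑ i ∈ s.attach, w i.1 * (Pi.single (J i) 1 : Fin t → ℝ) k := by
      intro k
      have := congrFun (congrArg Prod.fst hsum) k
      rw [Prod.fst_sum] at this
      simp only [Prod.smul_fst, Finset.sum_apply, Pi.smul_apply, smul_eq_mul] at this
      rw [← this]
      exact (Finset.sum_congr rfl fun i _ => by rw [hJ1 i]).symm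
    have hsnd : ∑ i ∈ s.attach, w i.1 • (z i.1).2 = x := by
      have := congrArg Prod.snd hsum
      rw [Prod.snd_sum] at this
      simpa using this
    -- τ k nonneg
    have hτ0 : ∀ k, 0 ≤ τ k := by
      intro k
      have : (0:ℝ) ≤ (τ k : ℝ) := by
        rw [hfst k]
        apply Finset.sum_nonneg
        intro i _
        apply mul_nonneg (hw0' i)
        rcases eq_or_ne k (J i) with h | h <;> simp [Pi.single_apply, h]
      exact_mod_cast this
    -- sum of τ = 1
    have hτsum : ∑ k, τ k = 1 := by
      have : (↑(∑ k, τ k) : ℝ) = 1 := by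
        push_cast
        calc ∑ k, (τ k : ℝ) = ∑ k, ∑ i ∈ s.attach, w i.1 * (Pi.single (J i) 1 : Fin t → ℝ) k := by
              exact Finset.sum_congr rfl fun k _ => hfst k
          _ = ∑ i ∈ s.attach, ∑ k, w i.1 * (Pi.single (J i) 1 : Fin t → ℝ) k := Finset.sum_comm
          _ = ∑ i ∈ s.attach, w i.1 := by
              refine Finset.sum_congr rfl fun i _ => ?_
              rw [← Finset.mul_sum]
              simp [Pi.single_apply]
          _ = 1 := hw1'
      exact_mod_cast this
    -- find j₀ with τ j₀ = 1, others 0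
    have hex : ∃ j₀, τ j₀ = 1 ∧ ∀ k, k ≠ j₀ → τ k = 0 := by
      have hne : ∃ j₀, τ j₀ ≠ 0 := by
        by_contra h
        push_neg at h
        simp [h] at hτsum
      obtain ⟨j₀, hj₀⟩ := hne
      have h1 : 1 ≤ τ j₀ := lt_of_le_of_ne (hτ0 j₀) (Ne.symm hj₀)
      have hle : τ j₀ ≤ 1 := by
        rw [← hτsum]
        exact Finset.single_le_sum (fun k _ => hτ0 k) (Finset.mem_univ j₀)
      have hj₀1 : τ j₀ = 1 := le_antisymm hle h1
      refine ⟨j₀, hj₀1, ?_⟩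
      have hrest : ∑ k ∈ Finset.univ.erase j₀, τ k = 0 := by
        have := Finset.sum_erase_add Finset.univ τ (Finset.mem_univ j₀)
        omega
      intro k hk
      have := (Finset.sum_eq_zero_iff_of_nonneg (fun k _ => hτ0 k)).1 hrest k
        (Finset.mem_erase.2 ⟨hk, Finset.mem_univ k⟩)
      exact this
    obtain ⟨j₀, hj₀, hrest⟩ := hex
    -- claim : w i ≠ 0 → J i = j₀
    have hJj₀ : ∀ i : {i // i ∈ s}, w i.1 ≠ 0 → J i = j₀ := by
      intro i hwi
      by_contra hne
      have h0 : (τ (J i) : ℝ) = 0 := by exact_mod_cast congrArg Int.cast (hrest _ hne)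
      have hge : w i.1 ≤ (τ (J i) : ℝ) := by
        rw [hfst (J i)]
        have : w i.1 * (Pi.single (J i) 1 : Fin t → ℝ) (J i) = w i.1 := by simp
        rw [← this]
        apply Finset.single_le_sum (f := fun i' => w i'.1 * (Pi.single (J i') 1 : Fin t → ℝ) (J i)) ?_
          (Finset.mem_univ i |> fun _ => Finset.mem_attach s i)
        intro i' _
        apply mul_nonneg (hw0' i')
        rcases eq_or_ne (J i) (J i') with h | h <;> simp [Pi.single_apply, h.symm]
      have : 0 < w i.1 := lt_of_le_of_ne (hw0' i) (Ne.symm hwi)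
      linarith [h0 ▸ hge]
    -- conclude x ∈ P j₀
    rw [Set.mem_iUnion]
    refine ⟨j₀, ?_⟩
    rw [← hsnd]
    set s' := s.attach.filter (fun i => w i.1 ≠ 0) with hs'
    have hsum' : ∑ i ∈ s', w i.1 • (z i.1).2 = ∑ i ∈ s.attach, w i.1 • (z i.1).2 := by
      apply Finset.sum_filter_of_ne
      intro i _ h hwz
      exact h (by rw [hwz, zero_smul])
    rw [← hsum']
    apply (hP j₀).sum_mem
    · intro i _; exact hw0' i
    · rw [hs', Finset.sum_filter_ne_zero]; exact hw1'
    · intro i hi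
      have hwi : w i.1 ≠ 0 := (Finset.mem_filter.1 hi).2
      rw [← hJj₀ i hwi]
      exact hJ2 i
end

section
/- Let a, n, t ≥ 1, let r_1, …, r_t be pairwise distinct vectors in {0,1}^a ⊆ ℝ^a, and let P_1, …, P_t be convex subsets of ℝ^n. Let R_j = {r_j} × P_j ⊆ ℝ^a × ℝ^n and let R be the convex hull of R_1 ∪ ⋯ ∪ R_t. Then for every point y ∈ ℤ^{a+n}: y ∈ R if and only if y ∈ R_j for some j with 1 ≤ j ≤ t. In other words, R ∩ ℤ^{a+n} = (R_1 ∩ ℤ^{a+n}) ∪ ⋯ ∪ (R_t ∩ ℤ^{a+n}). -/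
/-- If `r_1, …, r_t` are pairwise distinct 0/1-vectors in `ℝ^a` and
`P_1, …, P_t ⊆ ℝ^n` are convex, then the integer points of
`R = conv({r_1} × P_1 ∪ ⋯ ∪ {r_t} × P_t)` are exactly the integer points of the
pieces `{r_j} × P_j`. -/
theorem integer_points_of_cube_lift
    (a n t : ℕ) (ha : 1 ≤ a) (hn : 1 ≤ n) (ht : 1 ≤ t)
    (r : Fin t → (Fin a → ℝ)) (hr01 : ∀ j i, r j i = 0 ∨ r j i = 1)
    (hrdist : Function.Injective r)
    (P : Fin t → Set (Fin n → ℝ)) (hP : ∀ j, Convex ℝ (P j))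
    (R : Set ((Fin a → ℝ) × (Fin n → ℝ)))
    (hR : R = convexHull ℝ (⋃ j, ({r j} : Set (Fin a → ℝ)) ×ˢ P j)) :
    ∀ y : (Fin a → ℝ) × (Fin n → ℝ),
      (∀ i, ∃ z : ℤ, y.1 i = (z : ℝ)) → (∀ i, ∃ z : ℤ, y.2 i = (z : ℝ)) →
        (y ∈ R ↔ ∃ j, y ∈ ({r j} : Set (Fin a → ℝ)) ×ˢ P j) := by
  intro y hy1 hy2
  constructor
  · intro hyR
    rw [hR, convexHull_eq] at hyR
    obtain ⟨ι, s, w, z, hw0, hw1, hz, hy⟩ := hyR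
    have hj : ∀ i ∈ s, ∃ j, (z i).1 = r j ∧ (z i).2 ∈ P j := by
      intro i hi
      obtain ⟨j, hmem⟩ := Set.mem_iUnion.mp (hz i hi)
      exact ⟨j, hmem.1, hmem.2⟩
    choose J hJ1 hJ2 using hj
    have hy' : ∑ i ∈ s, w i • z i = y := by
      rw [← hy, Finset.centerMass_eq_of_sum_1 _ _ hw1]
    have hy1' : y.1 = ∑ i ∈ s, w i • (z i).1 := by
      rw [← hy']; simp [Prod.fst_sum]
    have hy2' : y.2 = ∑ i ∈ s, w i • (z i).2 := by
      rw [← hy']; simp [Prod.snd_sum]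
    -- key: every active piece has first coordinate equal to y.1
    have key : ∀ i ∈ s, w i ≠ 0 → (z i).1 = y.1 := by
      intro i hi hwi
      funext k
      have hv : ∀ i' ∈ s, (z i').1 k = 0 ∨ (z i').1 k = 1 := by
        intro i' hi'
        rw [hJ1 i' hi']; exact hr01 _ k
      have hyk : y.1 k = ∑ i' ∈ s, w i' * (z i').1 k := by
        rw [hy1']
        simp [Finset.sum_apply]
      have hterm0 : ∀ i' ∈ s, 0 ≤ w i' * (z i').1 k := by
        intro i' hi'
        rcases hv i' hi' with h | h <;> rw [h] <;> nlinarith [hw0 i' hi']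
      have h0 : (0:ℝ) ≤ y.1 k := by
        rw [hyk]; exact Finset.sum_nonneg hterm0
      have h1 : y.1 k ≤ 1 := by
        rw [hyk, ← hw1]
        apply Finset.sum_le_sum
        intro i' hi'
        rcases hv i' hi' with h | h <;> rw [h] <;> nlinarith [hw0 i' hi']
      obtain ⟨zk, hzk⟩ := hy1 k
      have hzk01 : y.1 k = 0 ∨ y.1 k = 1 := by
        rw [hzk] at h0 h1 ⊢
        have hz0 : (0:ℤ) ≤ zk := by exact_mod_cast h0
        have hz1 : zk ≤ 1 := by exact_mod_cast h1
        interval_cases zk <;> simp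
      rcases hzk01 with hc | hc
      · -- all terms zero
        have := (Finset.sum_eq_zero_iff_of_nonneg hterm0).mp (by rw [← hyk, hc]) i hi
        rcases hv i hi with h | h
        · rw [h, hc]
        · rw [h] at this; simp at this; exact absurd this hwi
      · have hsum : ∑ i' ∈ s, w i' * (1 - (z i').1 k) = 0 := by
          have : ∑ i' ∈ s, w i' * (1 - (z i').1 k)
              = (∑ i' ∈ s, w i') - ∑ i' ∈ s, w i' * (z i').1 k := by
            rw [← Finset.sum_sub_distrib]; apply Finset.sum_congr rfl; intros; ring
          rw [this, hw1, ← hyk, hc]; ring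
        have hnn : ∀ i' ∈ s, 0 ≤ w i' * (1 - (z i').1 k) := by
          intro i' hi'
          rcases hv i' hi' with h | h <;> rw [h] <;> nlinarith [hw0 i' hi']
        have := (Finset.sum_eq_zero_iff_of_nonneg hnn).mp hsum i hi
        rcases hv i hi with h | h
        · rw [h] at this; simp at this; exact absurd this hwi
        · rw [h, hc]
      -- done with hzk01 cases inside funext
    obtain ⟨i0, hi0, hwi0⟩ : ∃ i0 ∈ s, w i0 ≠ 0 := by
      by_contra hcon
      push_neg at hcon
      have : ∑ i ∈ s, w i = 0 := Finset.sum_eq_zero hcon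
      rw [hw1] at this; norm_num at this
    refine ⟨J i0 hi0, ?_, ?_⟩
    · show y.1 ∈ ({r (J i0 hi0)} : Set (Fin a → ℝ))
      rw [Set.mem_singleton_iff, ← hJ1 i0 hi0, key i0 hi0 hwi0]
    · -- y.2 ∈ P (J i0 hi0)
      have hJconst : ∀ i (hi : i ∈ s), w i ≠ 0 → J i hi = J i0 hi0 := by
        intro i hi hwi
        apply hrdist
        rw [← hJ1 i hi, ← hJ1 i0 hi0, key i hi hwi, key i0 hi0 hwi0]
      have hy2'' : y.2 = ∑ i ∈ s.filter (fun i => w i ≠ 0), w i • (z i).2 := by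
        rw [hy2']
        rw [Finset.sum_filter_of_ne]
        intro i _ h hw
        exact absurd (by rw [hw]; simp) h
      rw [hy2'']
      apply (hP (J i0 hi0)).sum_mem
      · intro i hi
        exact hw0 i (Finset.mem_filter.mp hi).1
      · rw [← hw1]
        apply Finset.sum_filter_of_ne
        intro i hi h hw
        exact h (by rw [hw])
      · intro i hi
        obtain ⟨his, hwi⟩ := Finset.mem_filter.mp hi
        rw [← hJconst i his hwi]
        exact hJ2 i his
  · rintro ⟨j, hj⟩
    rw [hR]
    exact subset_convexHull ℝ _ (Set.mem_iUnion.mpr ⟨j, hj⟩)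
end

section
/- Fix n ≥ 1 and let m ≥ 2^n. Let A be a rational m × n matrix and b ∈ ℚ^m. Then the system A x ≤ b has a solution x ∈ ℤ^n if and only if for every subset I of the row indices {1, …, m} with |I| = 2^n, the subsystem consisting of the rows indexed by I (i.e. (A x)_i ≤ b_i for all i ∈ I) has a solution x ∈ ℤ^n. -/
open Finset

/-- Key step of Doignon–Bell–Scarf: if a finite system over `ℤ` indexed by `t` with
`t.card > 2^n` is such that each subsystem obtained by erasing one row is feasible,
then the full system is feasible. -/
lemma dbs_key {n m : ℕ} (A : Fin m → Fin n → ℤ) (b : Fin m → ℤ) (t : Finset (Fin m))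
    (ht : 2 ^ n < t.card)
    (hy : ∀ i ∈ t, ∃ y : Fin n → ℤ, ∀ k ∈ t.erase i, ∑ j, A k j * y j ≤ b k) :
    ∃ x : Fin n → ℤ, ∀ i ∈ t, ∑ j, A i j * x j ≤ b i := by
  classical
  by_contra hcon
  choose! y hy using hy
  -- each `y i` must violate row `i`
  have hvi : ∀ i ∈ t, b i < ∑ j, A i j * y i j := by
    intro i hi
    by_contra hle
    push_neg at hle
    exact hcon ⟨y i, fun k hk => by
      rcases eq_or_ne k i with rfl | hne
      · exact hle
      · exact hy i hi k (Finset.mem_erase.mpr ⟨hne, hk⟩)⟩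
  set u : Fin m → ℤ := fun i => max (b i) (∑ j, A i j * y i j - 1) with hu
  have hbu : b ≤ u := fun i => le_max_left _ _
  have hut : ∀ i ∈ t, u i = ∑ j, A i j * y i j - 1 := by
    intro i hi
    exact max_eq_right (by have := hvi i hi; omega)
  -- the finite set of "infeasible right-hand sides"
  set S : Finset (Fin m → ℤ) :=
    (Finset.Icc b u).filter (fun c => ¬ ∃ x : Fin n → ℤ, ∀ i ∈ t, ∑ j, A i j * x j ≤ c i)
    with hS
  have hbS : b ∈ S := Finset.mem_filter.mpr ⟨Finset.mem_Icc.mpr ⟨le_refl _, hbu⟩, hcon⟩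
  obtain ⟨c, hcS, hmax⟩ := S.exists_max_image (fun c => ∑ i ∈ t, c i) ⟨b, hbS⟩
  obtain ⟨hcIcc, hcinf⟩ := Finset.mem_filter.mp hcS
  obtain ⟨hbc, hcu⟩ := Finset.mem_Icc.mp hcIcc
  -- for each row there is a point tight at that row and satisfying the others
  have key : ∀ i ∈ t, ∃ z : Fin n → ℤ,
      (∑ j, A i j * z j = c i + 1) ∧ ∀ k ∈ t.erase i, ∑ j, A k j * z j ≤ c k := by
    intro i hi
    by_cases hci : c i = u i
    · refine ⟨y i, ?_, fun k hk => le_trans (hy i hi k hk) (hbc k)⟩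
      rw [hci, hut i hi]; ring
    · have hlt : c i < u i := lt_of_le_of_ne (hcu i) hci
      set c' : Fin m → ℤ := Function.update c i (c i + 1) with hc'
      have hcc' : ∀ k, c k ≤ c' k := by
        intro k
        rcases eq_or_ne k i with rfl | hne
        · simp [hc']
        · simp [hc', Function.update_of_ne hne]
      have hc'Icc : c' ∈ Finset.Icc b u := by
        refine Finset.mem_Icc.mpr ⟨fun k => le_trans (hbc k) (hcc' k), fun k => ?_⟩
        rcases eq_or_ne k i with rfl | hne
        · simp [hc']; omega
        · simp [hc', Function.update_of_ne hne]; exact hcu k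
      -- `c'` must be feasible, else it would contradict maximality of `c`
      have hc'feas : ∃ x : Fin n → ℤ, ∀ k ∈ t, ∑ j, A k j * x j ≤ c' k := by
        by_contra hinf
        have hc'S : c' ∈ S := Finset.mem_filter.mpr ⟨hc'Icc, hinf⟩
        have := hmax c' hc'S
        have hsum : ∑ k ∈ t, c k < ∑ k ∈ t, c' k := by
          apply Finset.sum_lt_sum (fun k _ => hcc' k) ⟨i, hi, by simp [hc']⟩
        omega
      obtain ⟨z, hz⟩ := hc'feas
      refine ⟨z, ?_, fun k hk => ?_⟩
      · have h1 : ∑ j, A i j * z j ≤ c i + 1 := by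
          have := hz i hi; simpa [hc'] using this
        have h2 : c i < ∑ j, A i j * z j := by
          by_contra hle
          push_neg at hle
          exact hcinf ⟨z, fun k hk => by
            rcases eq_or_ne k i with rfl | hne
            · exact hle
            · have := hz k hk; rwa [hc', Function.update_of_ne hne] at this⟩
        omega
      · obtain ⟨hne, hkt⟩ := Finset.mem_erase.mp hk
        have := hz k hkt; rwa [hc', Function.update_of_ne hne] at this
  choose! z hz1 hz2 using key
  -- pigeonhole modulo 2
  have hcard : (Finset.univ : Finset (Fin n → ZMod 2)).card < t.card := by
    rw [Finset.card_univ]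
    simpa [Fintype.card_fun] using ht
  obtain ⟨i, hi, j, hj, hij, hmod⟩ :=
    Finset.exists_ne_map_eq_of_card_lt_of_maps_to hcard
      (f := fun i => (fun l => ((z i l : ℤ) : ZMod 2)))
      (fun a _ => Finset.mem_univ _)
  -- the midpoint is integral
  have hdvd : ∀ l, (2 : ℤ) ∣ z i l + z j l := by
    intro l
    have h1 : ((z i l : ℤ) : ZMod 2) = ((z j l : ℤ) : ZMod 2) := congrFun hmod l
    have : (((z i l + z j l : ℤ)) : ZMod 2) = 0 := by
      push_cast
      rw [h1, ← two_mul]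
      exact mul_eq_zero_of_left (by decide) _
    exact (ZMod.intCast_zmod_eq_zero_iff_dvd _ 2).mp this
  set w : Fin n → ℤ := fun l => (z i l + z j l) / 2 with hw
  have h2w : ∀ l, 2 * w l = z i l + z j l := fun l => Int.mul_ediv_cancel' (hdvd l)
  -- `w` satisfies the whole system with rhs `c`, contradiction
  apply hcinf
  refine ⟨w, fun k hk => ?_⟩
  have hsum : 2 * ∑ l, A k l * w l = (∑ l, A k l * z i l) + (∑ l, A k l * z j l) := by
    rw [Finset.mul_sum, ← Finset.sum_add_distrib]
    refine Finset.sum_congr rfl (fun l _ => ?_)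
    calc 2 * (A k l * w l) = A k l * (2 * w l) := by ring
      _ = A k l * (z i l + z j l) := by rw [h2w l]
      _ = A k l * z i l + A k l * z j l := by ring
  have hik : i ∈ t.erase j := Finset.mem_erase.mpr ⟨hij, hi⟩
  have hjk : j ∈ t.erase i := Finset.mem_erase.mpr ⟨hij.symm, hj⟩
  rcases eq_or_ne k i with rfl | hki
  · have h1 := hz1 k hi
    have h2 := hz2 j hj k hik
    omega
  rcases eq_or_ne k j with rfl | hkj
  · have h1 := hz1 k hj
    have h2 := hz2 i hi k hjk
    omega
  · have h1 := hz2 i hi k (Finset.mem_erase.mpr ⟨hki, hk⟩)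
    have h2 := hz2 j hj k (Finset.mem_erase.mpr ⟨hkj, hk⟩)
    omega

/-- Doignon–Bell–Scarf over `ℤ` with integer data. -/
lemma dbs_int {n m : ℕ} (A : Fin m → Fin n → ℤ) (b : Fin m → ℤ)
    (h : ∀ t : Finset (Fin m), t.card ≤ 2 ^ n →
      ∃ x : Fin n → ℤ, ∀ i ∈ t, ∑ j, A i j * x j ≤ b i) :
    ∃ x : Fin n → ℤ, ∀ i, ∑ j, A i j * x j ≤ b i := by
  classical
  by_contra hcon
  set S : Finset (Finset (Fin m)) :=
    Finset.univ.filter (fun t => ¬ ∃ x : Fin n → ℤ, ∀ i ∈ t, ∑ j, A i j * x j ≤ b i) with hS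
  have huS : (Finset.univ : Finset (Fin m)) ∈ S := by
    refine Finset.mem_filter.mpr ⟨Finset.mem_univ _, ?_⟩
    intro ⟨x, hx⟩
    exact hcon ⟨x, fun i => hx i (Finset.mem_univ i)⟩
  obtain ⟨t, htS, hmin⟩ := S.exists_min_image Finset.card ⟨_, huS⟩
  have htinf := (Finset.mem_filter.mp htS).2
  have htcard : 2 ^ n < t.card := by
    by_contra hle
    push_neg at hle
    exact htinf (h t hle)
  refine htinf (dbs_key A b t htcard (fun i hi => ?_))
  by_contra hinf
  have : t.erase i ∈ S := Finset.mem_filter.mpr ⟨Finset.mem_univ _, hinf⟩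
  have := hmin _ this
  have := Finset.card_erase_of_mem hi
  have hpos : 0 < t.card := Finset.card_pos.mpr ⟨i, hi⟩
  omega

/-- Doignon–Bell–Scarf reduction: For fixed `n ≥ 1` and
`m ≥ 2^n`, a system `A x ≤ b` of `m` rational inequalities in `n` integer
variables is solvable iff every subsystem of `2^n` of the inequalities is. -/
theorem integer_solvable_iff_all_short_subsystems
    (n m : ℕ) (hn : 1 ≤ n) (hm : 2 ^ n ≤ m)
    (A : Matrix (Fin m) (Fin n) ℚ) (b : Fin m → ℚ) :
    (∃ x : Fin n → ℤ, ∀ i, A.mulVec (fun j => (x j : ℚ)) i ≤ b i) ↔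
      (∀ I : Finset (Fin m), I.card = 2 ^ n →
        ∃ x : Fin n → ℤ, ∀ i ∈ I, A.mulVec (fun j => (x j : ℚ)) i ≤ b i) := by
  classical
  constructor
  · rintro ⟨x, hx⟩ I _
    exact ⟨x, fun i _ => hx i⟩
  · intro h
    -- clear denominators: integer data
    set D : Fin m → ℕ := fun i => ∏ j, (A i j).den with hD
    have hDpos : ∀ i, 0 < (D i : ℚ) := by
      intro i
      have : 0 < D i := Finset.prod_pos (fun j _ => (A i j).pos)
      exact_mod_cast this
    set A' : Fin m → Fin n → ℤ := fun i j => (A i j).num * (D i / (A i j).den : ℕ) with hA'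
    set b' : Fin m → ℤ := fun i => ⌊b i * D i⌋ with hb'
    have hA'cast : ∀ i j, (A' i j : ℚ) = A i j * D i := by
      intro i j
      have hdvd : (A i j).den ∣ D i := Finset.dvd_prod_of_mem _ (Finset.mem_univ j)
      obtain ⟨k, hk⟩ := hdvd
      have hkdiv : D i / (A i j).den = k := by
        rw [hk]; exact Nat.mul_div_cancel_left k (A i j).pos
      rw [hA']
      simp only [hkdiv]
      push_cast [hk]
      rw [← mul_assoc]
      congr 1
      rw [mul_comm]
      exact_mod_cast (Rat.den_mul_eq_num (A i j)).symm
    -- equivalence of the two systems, row by row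
    have hequiv : ∀ (x : Fin n → ℤ) (i : Fin m),
        A.mulVec (fun j => (x j : ℚ)) i ≤ b i ↔ ∑ j, A' i j * x j ≤ b' i := by
      intro x i
      have hmv : A.mulVec (fun j => (x j : ℚ)) i = ∑ j, A i j * x j := by
        simp [Matrix.mulVec, dotProduct]
      rw [hmv, hb', Int.le_floor]
      have hcast : ((∑ j, A' i j * x j : ℤ) : ℚ) = (∑ j, A i j * (x j : ℚ)) * D i := by
        push_cast
        rw [Finset.sum_mul]
        refine Finset.sum_congr rfl (fun j _ => ?_)
        rw [hA'cast i j]; ring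
      rw [hcast]
      constructor
      · intro hle; exact mul_le_mul_of_nonneg_right hle (le_of_lt (hDpos i))
      · intro hle; exact le_of_mul_le_mul_right hle (hDpos i)
    have hsub : ∀ t : Finset (Fin m), t.card ≤ 2 ^ n →
        ∃ x : Fin n → ℤ, ∀ i ∈ t, ∑ j, A' i j * x j ≤ b' i := by
      intro t htcard
      obtain ⟨I, htI, hIcard⟩ := Finset.exists_superset_card_eq htcard (by
        simpa [Fintype.card_fin] using hm)
      obtain ⟨x, hx⟩ := h I hIcard
      exact ⟨x, fun i hi => (hequiv x i).mp (hx i (htI hi))⟩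
    obtain ⟨x, hx⟩ := dbs_int A' b' hsub
    exact ⟨x, fun i => (hequiv x i).mpr (hx i)⟩
end
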